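/- (Weight-dependence of Pauli correlations under symmetry) Let n ≥ 1 and let ρ be a complex matrix on ℂ^{2^n} ⊗ ℂ^{2^n} (indexed by ((Fin n → Fin 2) × (Fin n → Fin 2)) pairs) satisfying: (i) for every permutation σ of Fin n, (P_σ ⊗ P_σ) · ρ · (P_σ ⊗ P_σ)ᴴ = ρ, where P_σ is the permutation matrix on ℂ^{2^n} given by P_σ x y = [x = y ∘ σ]; and (ii) for every family U : Fin n → Matrix (Fin 2) (Fin 2) ℂ of unitary matrices, (V ⊗ V) · ρ · (V ⊗ V)ᴴ = ρ, where V is the matrix on ℂ^{2^n} with V x y = ∏_k (U k) (x k) (y k). Then tr((E_s ⊗ E_sᴴ) · ρ) = tr((E_t ⊗ E_tᴴ) · ρ) whenever wt s = wt t. -/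

import Mathlib

open Matrix Kronecker ComplexOrder

/-- The four Pauli matrices `σ₀, σ₁, σ₂, σ₃`. -/
def pauli : Fin 4 → Matrix (Fin 2) (Fin 2) ℂ :=
  ![!![1, 0; 0, 1], !![0, 1; 1, 0], !![0, -Complex.I; Complex.I, 0], !![1, 0; 0, -1]]

/-- The Pauli string `E_s`, `E_s x y = ∏_k (σ_{s k}) (x k) (y k)`. -/
def pauliString (n : ℕ) (s : Fin n → Fin 4) :
    Matrix (Fin n → Fin 2) (Fin n → Fin 2) ℂ :=
  Matrix.of fun x y => ∏ k, pauli (s k) (x k) (y k)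

/-- The weight of a Pauli label: the number of non-identity tensor factors. -/
def wt {n : ℕ} (s : Fin n → Fin 4) : ℕ :=
  (Finset.univ.filter fun k => s k ≠ 0).card

/-- The swap operator on `ℂ^{2^n} ⊗ ℂ^{2^n}`. -/
def swapN (n : ℕ) :
    Matrix ((Fin n → Fin 2) × (Fin n → Fin 2)) ((Fin n → Fin 2) × (Fin n → Fin 2)) ℂ :=
  Matrix.of fun p q => if p.1 = q.2 ∧ p.2 = q.1 then 1 else 0

/-- The permutation matrix `P_σ x y = [x = y ∘ σ]` on `ℂ^{2^n}`. -/
def permMat (n : ℕ) (σ : Equiv.Perm (Fin n)) :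
    Matrix (Fin n → Fin 2) (Fin n → Fin 2) ℂ :=
  Matrix.of fun x y => if x = y ∘ σ then 1 else 0

/-- The local matrix `V x y = ∏_k (U k) (x k) (y k)` on `ℂ^{2^n}`. -/
def locMat (n : ℕ) (U : Fin n → Matrix (Fin 2) (Fin 2) ℂ) :
    Matrix (Fin n → Fin 2) (Fin n → Fin 2) ℂ :=
  Matrix.of fun x y => ∏ k, U k (x k) (y k)

/-! ### Auxiliary lemmas -/

lemma kron_conjT {m : Type*} [Fintype m] [DecidableEq m]
    (A B : Matrix m m ℂ) : (A ⊗ₖ B)ᴴ = Aᴴ ⊗ₖ Bᴴ := by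
  ext ⟨i, j⟩ ⟨k, l⟩
  simp [Matrix.conjTranspose_apply, Matrix.kroneckerMap_apply, mul_comm]

lemma trace_conj {m : Type*} [Fintype m] [DecidableEq m]
    (ρ M W : Matrix m m ℂ) (h : W * ρ * Wᴴ = ρ) :
    (M * ρ).trace = ((Wᴴ * M * W) * ρ).trace := by
  conv_lhs => rw [← h]
  rw [show M * (W * ρ * Wᴴ) = (M * W * ρ) * Wᴴ by noncomm_ring, Matrix.trace_mul_comm,
    show Wᴴ * (M * W * ρ) = (Wᴴ * M * W) * ρ by noncomm_ring]

lemma loc_mul (n : ℕ) (U V : Fin n → Matrix (Fin 2) (Fin 2) ℂ) :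
    locMat n U * locMat n V = locMat n (fun k => U k * V k) := by
  ext x y
  simp only [locMat, Matrix.mul_apply, Matrix.of_apply]
  rw [← Finset.sum_prod_piFinset Finset.univ
    (fun k (j : Fin 2) => U k (x k) j * V k j (y k))]
  rw [show (Fintype.piFinset fun _ : Fin n => (Finset.univ : Finset (Fin 2))) = Finset.univ by
    ext; simp]
  exact Finset.sum_congr rfl fun a _ => (Finset.prod_mul_distrib).symm

lemma loc_conjT (n : ℕ) (U : Fin n → Matrix (Fin 2) (Fin 2) ℂ) :
    (locMat n U)ᴴ = locMat n (fun k => (U k)ᴴ) := by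
  ext x y
  simp [locMat, Matrix.conjTranspose_apply, map_prod]

lemma pauliString_eq_loc (n : ℕ) (s : Fin n → Fin 4) :
    pauliString n s = locMat n (fun k => pauli (s k)) := rfl

lemma perm_conj (n : ℕ) (σ : Equiv.Perm (Fin n)) (U : Fin n → Matrix (Fin 2) (Fin 2) ℂ) :
    (permMat n σ)ᴴ * locMat n U * permMat n σ = locMat n (fun k => U (σ⁻¹ k)) := by
  ext x y
  have key : ∀ (M : Matrix (Fin n → Fin 2) (Fin n → Fin 2) ℂ),
      ((permMat n σ)ᴴ * M * permMat n σ) x y = M (x ∘ σ) (y ∘ σ) := by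
    intro M
    simp only [Matrix.mul_apply, permMat, Matrix.conjTranspose_apply, Matrix.of_apply,
      apply_ite (star : ℂ → ℂ), star_one, star_zero, ite_mul, mul_ite, one_mul, zero_mul,
      mul_one, mul_zero, Finset.sum_ite_eq', Finset.sum_ite_eq, Finset.mem_univ, if_true]
  rw [key]
  simp only [locMat, Matrix.of_apply, Function.comp_apply]
  exact Fintype.prod_equiv σ _ _ (fun k => by simp)

lemma prod_entry_update (n : ℕ) (U : Fin n → Matrix (Fin 2) (Fin 2) ℂ) (k₀ : Fin n)
    (B : Matrix (Fin 2) (Fin 2) ℂ) (x y : Fin n → Fin 2) :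
    ∏ k, (Function.update U k₀ B) k (x k) (y k)
      = B (x k₀) (y k₀) * ∏ k ∈ Finset.univ \ {k₀}, U k (x k) (y k) := by
  rw [show (fun k => Function.update U k₀ B k (x k) (y k))
      = Function.update (fun k => U k (x k) (y k)) k₀ (B (x k₀) (y k₀))
    from funext fun k => by
      rcases eq_or_ne k k₀ with rfl | h
      · simp
      · simp [Function.update_of_ne h]]
  rw [Finset.prod_update_of_mem (Finset.mem_univ k₀)]

lemma loc_smul_update (n : ℕ) (U : Fin n → Matrix (Fin 2) (Fin 2) ℂ)
    (k₀ : Fin n) (c : ℂ) (A : Matrix (Fin 2) (Fin 2) ℂ) :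
    locMat n (Function.update U k₀ (c • A)) = c • locMat n (Function.update U k₀ A) := by
  ext x y
  simp only [locMat, Matrix.of_apply, Matrix.smul_apply, smul_eq_mul]
  rw [prod_entry_update, prod_entry_update]
  simp [mul_assoc]

/-! ### Single-qubit unitary moves between Pauli matrices -/

noncomputable def Hmat : Matrix (Fin 2) (Fin 2) ℂ :=
  (Real.sqrt 2 : ℂ)⁻¹ • !![1, 1; 1, -1]

def Smat : Matrix (Fin 2) (Fin 2) ℂ := !![1, 0; 0, Complex.I]

lemma sqrt2_sq : ((Real.sqrt 2 : ℝ) : ℂ) ^ 2 = 2 := by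
  rw [← Complex.ofReal_pow, Real.sq_sqrt (by norm_num)]; norm_num

lemma sqrt2_ne : ((Real.sqrt 2 : ℝ) : ℂ) ≠ 0 := by simp [Real.sqrt_eq_zero']

lemma Hmat_unitary : Hmat * Hmatᴴ = 1 := by
  have hne := sqrt2_ne
  ext i j
  fin_cases i <;> fin_cases j <;>
    simp [Hmat, Matrix.mul_apply, Fin.sum_univ_succ, Matrix.conjTranspose_apply,
      Matrix.one_apply] <;>
    field_simp <;> ring_nf <;> simp [sqrt2_sq]

lemma Smat_unitary : Smat * Smatᴴ = 1 := by
  ext i j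
  fin_cases i <;> fin_cases j <;>
    simp [Smat, Matrix.mul_apply, Fin.sum_univ_succ, Matrix.conjTranspose_apply,
      Matrix.one_apply]

lemma H13 : Hmatᴴ * pauli 1 * Hmat = pauli 3 := by
  have hne := sqrt2_ne
  ext i j
  fin_cases i <;> fin_cases j <;>
    simp [Hmat, pauli, Matrix.mul_apply, Fin.sum_univ_succ, Matrix.conjTranspose_apply] <;>
    field_simp <;> ring_nf <;> simp [sqrt2_sq]

lemma H31 : Hmatᴴ * pauli 3 * Hmat = pauli 1 := by
  have hne := sqrt2_ne
  ext i j
  fin_cases i <;> fin_cases j <;>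
    simp [Hmat, pauli, Matrix.mul_apply, Fin.sum_univ_succ, Matrix.conjTranspose_apply] <;>
    field_simp <;> ring_nf <;> simp [sqrt2_sq]

lemma S21 : Smatᴴ * pauli 2 * Smat = pauli 1 := by
  ext i j
  fin_cases i <;> fin_cases j <;>
    simp [Smat, pauli, Matrix.mul_apply, Fin.sum_univ_succ, Matrix.conjTranspose_apply]

lemma S12 : Smatᴴ * pauli 1 * Smat = (-1 : ℂ) • pauli 2 := by
  ext i j
  fin_cases i <;> fin_cases j <;>
    simp [Smat, pauli, Matrix.mul_apply, Fin.sum_univ_succ, Matrix.conjTranspose_apply]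

lemma conj_mul2 (A B M : Matrix (Fin 2) (Fin 2) ℂ) :
    (A * B)ᴴ * M * (A * B) = Bᴴ * (Aᴴ * M * A) * B := by
  rw [Matrix.conjTranspose_mul]; noncomm_ring

lemma unit_mul2 (A B : Matrix (Fin 2) (Fin 2) ℂ) (hA : A * Aᴴ = 1) (hB : B * Bᴴ = 1) :
    (A * B) * (A * B)ᴴ = 1 := by
  rw [Matrix.conjTranspose_mul, show A * B * (Bᴴ * Aᴴ) = A * (B * Bᴴ) * Aᴴ by noncomm_ring,
    hB, mul_one, hA]

lemma pauli_move (a b : Fin 4) (ha : a ≠ 0) (hb : b ≠ 0) :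
    ∃ (U : Matrix (Fin 2) (Fin 2) ℂ) (c : ℂ),
      U * Uᴴ = 1 ∧ c * star c = 1 ∧ Uᴴ * pauli a * U = c • pauli b := by
  have hid : ∀ v : Fin 4, (1 : Matrix (Fin 2) (Fin 2) ℂ)ᴴ * pauli v * 1 = (1 : ℂ) • pauli v := by
    intro v; simp
  fin_cases a <;> fin_cases b
  · exact absurd rfl ha
  · exact absurd rfl ha
  · exact absurd rfl ha
  · exact absurd rfl ha
  · exact absurd rfl hb
  · exact ⟨1, 1, by simp, by simp, hid 1⟩
  · exact ⟨Smat, -1, Smat_unitary, by simp, S12⟩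
  · exact ⟨Hmat, 1, Hmat_unitary, by simp,
      by show Hmatᴴ * pauli 1 * Hmat = (1 : ℂ) • pauli 3; rw [H13, one_smul]⟩
  · exact absurd rfl hb
  · exact ⟨Smat, 1, Smat_unitary, by simp,
      by show Smatᴴ * pauli 2 * Smat = (1 : ℂ) • pauli 1; rw [S21, one_smul]⟩
  · exact ⟨1, 1, by simp, by simp, hid 2⟩
  · exact ⟨Smat * Hmat, 1, unit_mul2 _ _ Smat_unitary Hmat_unitary, by simp,
      by show (Smat * Hmat)ᴴ * pauli 2 * (Smat * Hmat) = (1 : ℂ) • pauli 3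
         rw [conj_mul2, S21, H13, one_smul]⟩
  · exact absurd rfl hb
  · exact ⟨Hmat, 1, Hmat_unitary, by simp,
      by show Hmatᴴ * pauli 3 * Hmat = (1 : ℂ) • pauli 1; rw [H31, one_smul]⟩
  · exact ⟨Hmat * Smat, -1, unit_mul2 _ _ Hmat_unitary Smat_unitary, by simp,
      by show (Hmat * Smat)ᴴ * pauli 3 * (Hmat * Smat) = (-1 : ℂ) • pauli 2
         rw [conj_mul2, H31, S12]⟩
  · exact ⟨1, 1, by simp, by simp, hid 3⟩

lemma conjT_sandwich {m : Type*} [Fintype m] (P E : Matrix m m ℂ) :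
    (Pᴴ * E * P)ᴴ = Pᴴ * Eᴴ * P := by
  simp [Matrix.conjTranspose_mul, Matrix.mul_assoc]

lemma aux_perm (n : ℕ)
    (ρ : Matrix ((Fin n → Fin 2) × (Fin n → Fin 2))
      ((Fin n → Fin 2) × (Fin n → Fin 2)) ℂ)
    (hperm : ∀ σ : Equiv.Perm (Fin n),
      (permMat n σ ⊗ₖ permMat n σ) * ρ * (permMat n σ ⊗ₖ permMat n σ)ᴴ = ρ)
    (u : Fin n → Fin 4) (σ : Equiv.Perm (Fin n)) :
    ((pauliString n u ⊗ₖ (pauliString n u)ᴴ) * ρ).trace =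
      ((pauliString n (fun k => u (σ⁻¹ k)) ⊗ₖ (pauliString n (fun k => u (σ⁻¹ k)))ᴴ)
        * ρ).trace := by
  have h1 := trace_conj ρ (pauliString n u ⊗ₖ (pauliString n u)ᴴ)
    (permMat n σ ⊗ₖ permMat n σ) (hperm σ)
  have hE : (permMat n σ)ᴴ * pauliString n u * permMat n σ
      = pauliString n (fun k => u (σ⁻¹ k)) := by
    rw [pauliString_eq_loc, perm_conj]; rfl
  have hEH : (permMat n σ)ᴴ * (pauliString n u)ᴴ * permMat n σ
      = (pauliString n (fun k => u (σ⁻¹ k)))ᴴ := by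
    rw [← conjT_sandwich, hE]
  rw [h1, kron_conjT, ← Matrix.mul_kronecker_mul, ← Matrix.mul_kronecker_mul, hE, hEH]

lemma aux_upd (n : ℕ)
    (ρ : Matrix ((Fin n → Fin 2) × (Fin n → Fin 2))
      ((Fin n → Fin 2) × (Fin n → Fin 2)) ℂ)
    (hloc : ∀ U : Fin n → Matrix (Fin 2) (Fin 2) ℂ, (∀ k, U k * (U k)ᴴ = 1) →
      (locMat n U ⊗ₖ locMat n U) * ρ * (locMat n U ⊗ₖ locMat n U)ᴴ = ρ)
    (u : Fin n → Fin 4) (k₀ : Fin n) (b : Fin 4) (hu : u k₀ ≠ 0) (hb : b ≠ 0) :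
    ((pauliString n u ⊗ₖ (pauliString n u)ᴴ) * ρ).trace =
      ((pauliString n (Function.update u k₀ b) ⊗ₖ (pauliString n (Function.update u k₀ b))ᴴ)
        * ρ).trace := by
  obtain ⟨U₀, c, hU₀, hc, hconj⟩ := pauli_move (u k₀) b hu hb
  set U : Fin n → Matrix (Fin 2) (Fin 2) ℂ :=
    Function.update (fun _ => (1 : Matrix (Fin 2) (Fin 2) ℂ)) k₀ U₀ with hUdef
  have hU : ∀ k, U k * (U k)ᴴ = 1 := by
    intro k
    rcases eq_or_ne k k₀ with rfl | h
    · simpa [hUdef] using hU₀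
    · simp [hUdef, Function.update_of_ne h]
  have h1 := trace_conj ρ (pauliString n u ⊗ₖ (pauliString n u)ᴴ)
    (locMat n U ⊗ₖ locMat n U) (hloc U hU)
  have hV : (locMat n U)ᴴ * pauliString n u * locMat n U
      = c • pauliString n (Function.update u k₀ b) := by
    rw [loc_conjT, pauliString_eq_loc, loc_mul, loc_mul]
    rw [show (fun k => (U k)ᴴ * pauli (u k) * U k)
        = Function.update (fun k => pauli (u k)) k₀ (c • pauli b)
      from funext fun k => by
        rcases eq_or_ne k k₀ with rfl | h
        · simpa [hUdef] using hconj
        · simp [hUdef, Function.update_of_ne h]]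
    rw [loc_smul_update]
    rw [show Function.update (fun k => pauli (u k)) k₀ (pauli b)
        = (fun k => pauli (Function.update u k₀ b k))
      from funext fun k => by
        rcases eq_or_ne k k₀ with rfl | h
        · simp
        · simp [Function.update_of_ne h]]
    rfl
  have hVH : (locMat n U)ᴴ * (pauliString n u)ᴴ * locMat n U
      = star c • (pauliString n (Function.update u k₀ b))ᴴ := by
    rw [← conjT_sandwich, hV, Matrix.conjTranspose_smul]
  rw [h1, kron_conjT, ← Matrix.mul_kronecker_mul, ← Matrix.mul_kronecker_mul, hV, hVH,
    Matrix.smul_kronecker, Matrix.kronecker_smul, smul_smul, hc, one_smul]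

/-- Weight-dependence of Pauli correlations under permutation and local unitary
symmetry of `ρ`. -/
theorem stmt18 (n : ℕ) (hn : 1 ≤ n)
    (ρ : Matrix ((Fin n → Fin 2) × (Fin n → Fin 2))
      ((Fin n → Fin 2) × (Fin n → Fin 2)) ℂ)
    (hperm : ∀ σ : Equiv.Perm (Fin n),
      (permMat n σ ⊗ₖ permMat n σ) * ρ * (permMat n σ ⊗ₖ permMat n σ)ᴴ = ρ)
    (hloc : ∀ U : Fin n → Matrix (Fin 2) (Fin 2) ℂ, (∀ k, U k * (U k)ᴴ = 1) →
      (locMat n U ⊗ₖ locMat n U) * ρ * (locMat n U ⊗ₖ locMat n U)ᴴ = ρ)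
    (s t : Fin n → Fin 4) (hwt : wt s = wt t) :
    ((pauliString n s ⊗ₖ (pauliString n s)ᴴ) * ρ).trace =
      ((pauliString n t ⊗ₖ (pauliString n t)ᴴ) * ρ).trace := by
  set T : (Fin n → Fin 4) → ℂ :=
    fun u => ((pauliString n u ⊗ₖ (pauliString n u)ᴴ) * ρ).trace with hT
  show T s = T t
  have key_perm : ∀ (u : Fin n → Fin 4) (σ : Equiv.Perm (Fin n)),
      T u = T (fun k => u (σ⁻¹ k)) :=
    fun u σ => aux_perm n ρ hperm u σ
  have key_upd : ∀ (u : Fin n → Fin 4) (k₀ : Fin n) (b : Fin 4),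
      u k₀ ≠ 0 → b ≠ 0 → T u = T (Function.update u k₀ b) :=
    fun u k₀ b hu hb => aux_upd n ρ hloc u k₀ b hu hb
  -- equal supports imply equal traces
  have same_supp : ∀ (d : ℕ) (u v : Fin n → Fin 4),
      (∀ k, u k = 0 ↔ v k = 0) →
      (Finset.univ.filter fun k => u k ≠ v k).card = d → T u = T v := by
    intro d
    induction d with
    | zero =>
      intro u v _ hcard
      have : u = v := by
        funext k
        by_contra hk
        have hmem : k ∈ Finset.univ.filter fun k => u k ≠ v k := by simp [hk]
        rw [Finset.card_eq_zero] at hcard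
        simp [hcard] at hmem
      rw [this]
    | succ d ih =>
      intro u v hsupp hcard
      have hne : (Finset.univ.filter fun k => u k ≠ v k).Nonempty := by
        rw [← Finset.card_pos, hcard]; omega
      obtain ⟨k₀, hk₀⟩ := hne
      rw [Finset.mem_filter] at hk₀
      have hdiff : u k₀ ≠ v k₀ := hk₀.2
      have hu0 : u k₀ ≠ 0 := by
        intro h
        exact hdiff (h.trans (((hsupp k₀).mp h).symm))
      have hv0 : v k₀ ≠ 0 := fun h => hu0 ((hsupp k₀).mpr h)
      rw [key_upd u k₀ (v k₀) hu0 hv0]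
      apply ih
      · intro k
        rcases eq_or_ne k k₀ with rfl | h
        · simp
        · rw [Function.update_of_ne h]; exact hsupp k
      · rw [show (Finset.univ.filter fun k => Function.update u k₀ (v k₀) k ≠ v k)
            = (Finset.univ.filter fun k => u k ≠ v k).erase k₀ by
          ext k
          rcases eq_or_ne k k₀ with rfl | h
          · simp
          · simp [Function.update_of_ne h, h]]
        rw [Finset.card_erase_of_mem (by simp [hdiff]), hcard]
        omega
  -- build a permutation matching the supports
  have hcards : Fintype.card {k // s k ≠ 0} = Fintype.card {k // t k ≠ 0} := by
    rw [Fintype.card_subtype, Fintype.card_subtype]; exact hwt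
  set e : {k // s k ≠ 0} ≃ {k // t k ≠ 0} := Fintype.equivOfCardEq hcards with he
  set σ : Equiv.Perm (Fin n) := e.extendSubtype with hσ
  rw [key_perm s σ]
  apply same_supp ((Finset.univ.filter fun k => s (σ⁻¹ k) ≠ t k).card)
  · intro k
    constructor
    · intro h
      have hx : ¬ (s (σ⁻¹ k) ≠ 0) := fun hp => hp h
      have h2 := e.extendSubtype_not_mem (σ⁻¹ k) hx
      rw [show e.extendSubtype (σ⁻¹ k) = k from σ.apply_symm_apply k] at h2
      exact not_not.mp h2
    · intro h
      by_contra hs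
      have h2 := e.extendSubtype_mem (σ⁻¹ k) hs
      rw [show e.extendSubtype (σ⁻¹ k) = k from σ.apply_symm_apply k] at h2
      exact h2 h
  · rfl
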